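/- Let N : ℕ, let f : ℝ → ℂ be differentiable at ξ(ρ), and let ρ : Fin N → ℂ satisfy ρ ≠ 0 and ξ(ρ) < 1. Then P_f is Fréchet differentiable over ℝ at ρ, and its derivative L maps every tangent vector into the B-orthogonal complement of the projected point: B(P_f(ρ), L(v)) = 0 for all v : Fin N → ℂ. (Toy-model form of Proposition 2, item 3, equations (LinProjGamma-orth)/(linprojgamma-orth): variations of the projection are consistent with the null constraint.) -/

import Mathlib

noncomputable section

open scoped BigOperators

namespace PureSpinorToy

variable {N : ℕ}

/-- Complex bilinear pairing `B(ρ,σ) = ∑ I, ρ_I σ_I`. -/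
def B (ρ σ : Fin N → ℂ) : ℂ := ∑ I, ρ I * σ I

/-- Hermitian inner product `⟪ρ,σ⟫ = ∑ I, conj(ρ_I) σ_I`. -/
def hInner (ρ σ : Fin N → ℂ) : ℂ := ∑ I, (starRingEnd ℂ) (ρ I) * σ I

/-- Norm square `‖ρ‖² = ⟪ρ,ρ⟫` (a nonnegative real). -/
def nsq (ρ : Fin N → ℂ) : ℝ := (hInner ρ ρ).re

/-- Componentwise complex conjugation `ρ̄`. -/
def conjFun (ρ : Fin N → ℂ) : Fin N → ℂ := fun I => (starRingEnd ℂ) (ρ I)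

/-- `ζ(ρ) = B(ρ,ρ)/‖ρ‖²`. -/
def zeta (ρ : Fin N → ℂ) : ℂ := B ρ ρ / (nsq ρ : ℂ)

/-- `ξ(ρ) = |ζ(ρ)|²`. -/
def xi (ρ : Fin N → ℂ) : ℝ := Complex.normSq (zeta ρ)

/-- The family of projection maps
`P_f(ρ) = f(ξ(ρ)) • (ρ − (ζ(ρ)/(1+√(1−ξ(ρ)))) • ρ̄)`. -/
def P (f : ℝ → ℂ) (ρ : Fin N → ℂ) : Fin N → ℂ :=
  f (xi ρ) • (ρ - (zeta ρ / (1 + (Real.sqrt (1 - xi ρ) : ℂ))) • conjFun ρ)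

/-- The special function `h(t) = (1+√(1−t))/(2√(1−t))`. -/
def h (t : ℝ) : ℂ := (((1 + Real.sqrt (1 - t)) / (2 * Real.sqrt (1 - t)) : ℝ) : ℂ)

/-- The potential `Φ(ρ) = (‖ρ‖²/2)(1+√(1−ξ(ρ)))`. -/
def Phi (ρ : Fin N → ℂ) : ℝ := (nsq ρ / 2) * (1 + Real.sqrt (1 - xi ρ))

lemma nsq_eq (σ : Fin N → ℂ) : nsq σ = ∑ I, Complex.normSq (σ I) := by
  simp [nsq, hInner, ← Complex.normSq_eq_conj_mul_self, Complex.ofReal_sum]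

lemma nsq_pos (σ : Fin N → ℂ) (h : σ ≠ 0) : 0 < nsq σ := by
  rw [nsq_eq]
  obtain ⟨I, hI⟩ : ∃ I, σ I ≠ 0 := by
    by_contra hc; push_neg at hc; exact h (funext hc)
  exact Finset.sum_pos' (fun i _ => Complex.normSq_nonneg _)
    ⟨I, Finset.mem_univ I, Complex.normSq_pos.mpr hI⟩

lemma B_conj_right (σ : Fin N → ℂ) : B σ (conjFun σ) = ((nsq σ : ℝ) : ℂ) := by
  simp [B, conjFun, Complex.mul_conj, nsq_eq, Complex.ofReal_sum]

lemma B_conj_left (σ : Fin N → ℂ) : B (conjFun σ) σ = ((nsq σ : ℝ) : ℂ) := by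
  simp [B, conjFun, mul_comm, Complex.mul_conj, nsq_eq, Complex.ofReal_sum]

lemma B_conj_conj (σ : Fin N → ℂ) : B (conjFun σ) (conjFun σ) = (starRingEnd ℂ) (B σ σ) := by
  simp [B, conjFun, map_sum]

lemma B_expand (a c : ℂ) (x y : Fin N → ℂ) :
    B (a • (x - c • y)) (a • (x - c • y)) =
      a^2 * (B x x - c * B x y - c * B y x + c^2 * B y y) := by
  simp only [B, Pi.smul_apply, Pi.sub_apply, smul_eq_mul, mul_sub, sub_mul, mul_add, add_mul,
    Finset.mul_sum]
  rw [← Finset.sum_sub_distrib, ← Finset.sum_sub_distrib, ← Finset.sum_add_distrib]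
  exact Finset.sum_congr rfl fun I _ => by ring

lemma Pf_null (f : ℝ → ℂ) (σ : Fin N → ℂ) (h0 : nsq σ ≠ 0) (h1 : xi σ ≤ 1) :
    B (P f σ) (P f σ) = 0 := by
  have hS2 : ((Real.sqrt (1 - xi σ) : ℝ) : ℂ)^2 = 1 - ((xi σ : ℝ) : ℂ) := by
    have h : (Real.sqrt (1 - xi σ))^2 = 1 - xi σ := Real.sq_sqrt (by linarith)
    have h2 := congrArg (fun t : ℝ => (t : ℂ)) h
    push_cast at h2
    rw [h2]
  have h1S : (1 : ℂ) + ((Real.sqrt (1 - xi σ) : ℝ) : ℂ) ≠ 0 := by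
    have hp : (0:ℝ) < 1 + Real.sqrt (1 - xi σ) := by
      have := Real.sqrt_nonneg (1 - xi σ); linarith
    rw [show (1 : ℂ) + ((Real.sqrt (1 - xi σ) : ℝ) : ℂ) = (((1 + Real.sqrt (1 - xi σ) : ℝ)) : ℂ)
      by push_cast; ring]
    exact_mod_cast ne_of_gt hp
  have hBσσ : B σ σ = zeta σ * ((nsq σ : ℝ) : ℂ) := by
    rw [zeta, div_mul_cancel₀]
    exact_mod_cast h0
  have hmul : zeta σ * (starRingEnd ℂ) (zeta σ) = ((xi σ : ℝ) : ℂ) := by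
    rw [Complex.mul_conj, xi]
  rw [P, B_expand, B_conj_right, B_conj_left, B_conj_conj, hBσσ, map_mul, Complex.conj_ofReal]
  set z := zeta σ
  set S : ℂ := ((Real.sqrt (1 - xi σ) : ℝ) : ℂ)
  set n : ℂ := ((nsq σ : ℝ) : ℂ)
  have : z * n - z / (1 + S) * n - z / (1 + S) * n + (z / (1 + S))^2 * ((starRingEnd ℂ) z * n)
      = 0 := by
    field_simp
    linear_combination (z * n) * hS2 + (z * n) * hmul
  rw [this, mul_zero]

lemma diff_eval (ρ : Fin N → ℂ) (I : Fin N) :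
    DifferentiableAt ℝ (fun σ : Fin N → ℂ => σ I) ρ :=
  differentiableAt_apply (𝕜 := ℝ) I ρ

lemma diff_nsq (ρ : Fin N → ℂ) : DifferentiableAt ℝ nsq ρ := by
  have hh : nsq (N := N) = fun σ : Fin N → ℂ =>
      ∑ I, ((σ I).re * (σ I).re + (σ I).im * (σ I).im) := by
    funext σ; rw [nsq_eq]; simp [Complex.normSq_apply]
  rw [hh]
  apply DifferentiableAt.fun_sum
  intro I _
  have hre : DifferentiableAt ℝ (fun σ : Fin N → ℂ => (σ I).re) ρ :=
    (Complex.reCLM.differentiableAt).comp ρ (diff_eval ρ I)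
  have him : DifferentiableAt ℝ (fun σ : Fin N → ℂ => (σ I).im) ρ :=
    (Complex.imCLM.differentiableAt).comp ρ (diff_eval ρ I)
  exact (hre.mul hre).add (him.mul him)

lemma diff_Bself (ρ : Fin N → ℂ) :
    DifferentiableAt ℝ (fun σ : Fin N → ℂ => B σ σ) ρ := by
  have hh : (fun σ : Fin N → ℂ => B σ σ) = fun σ => ∑ I, σ I * σ I := rfl
  rw [hh]
  exact DifferentiableAt.fun_sum fun I _ => (diff_eval ρ I).mul (diff_eval ρ I)

lemma diff_zeta (ρ : Fin N → ℂ) (hρ : ρ ≠ 0) : DifferentiableAt ℝ zeta ρ := by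
  have hn0 : ((nsq ρ : ℝ) : ℂ) ≠ 0 := by
    exact_mod_cast ne_of_gt (nsq_pos ρ hρ)
  have h2 : DifferentiableAt ℝ (fun σ : Fin N → ℂ => ((nsq σ : ℝ) : ℂ)) ρ :=
    (Complex.ofRealCLM.differentiableAt).comp ρ (diff_nsq ρ)
  unfold zeta
  simp only [div_eq_mul_inv]
  exact (diff_Bself ρ).mul (h2.inv hn0)

lemma diff_xi (ρ : Fin N → ℂ) (hρ : ρ ≠ 0) : DifferentiableAt ℝ xi ρ := by
  have hh : xi (N := N) = fun σ =>
      ((zeta σ).re * (zeta σ).re + (zeta σ).im * (zeta σ).im) := by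
    funext σ; rw [xi]; simp [Complex.normSq_apply]
  rw [hh]
  have hz := diff_zeta ρ hρ
  have hre : DifferentiableAt ℝ (fun σ : Fin N → ℂ => (zeta σ).re) ρ :=
    (Complex.reCLM.differentiableAt).comp ρ hz
  have him : DifferentiableAt ℝ (fun σ : Fin N → ℂ => (zeta σ).im) ρ :=
    (Complex.imCLM.differentiableAt).comp ρ hz
  exact (hre.mul hre).add (him.mul him)

lemma diff_conjFun (ρ : Fin N → ℂ) : DifferentiableAt ℝ conjFun ρ := by
  apply differentiableAt_pi.2
  intro I
  exact (Complex.conjCLE.differentiable.differentiableAt).comp ρ (diff_eval ρ I)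

lemma diff_P (f : ℝ → ℂ) (ρ : Fin N → ℂ) (hρ : ρ ≠ 0) (hξ : xi ρ < 1)
    (hfd : DifferentiableAt ℝ f (xi ρ)) : DifferentiableAt ℝ (P f) ρ := by
  have hxi := diff_xi ρ hρ
  have hsub : DifferentiableAt ℝ (fun σ : Fin N → ℂ => 1 - xi σ) ρ :=
    (differentiableAt_const (1:ℝ)).sub hxi
  have hsqrt : DifferentiableAt ℝ (fun σ : Fin N → ℂ => Real.sqrt (1 - xi σ)) ρ :=
    hsub.sqrt (ne_of_gt (by linarith))
  have hS : DifferentiableAt ℝ (fun σ : Fin N → ℂ => (1 : ℂ) + ((Real.sqrt (1 - xi σ) : ℝ) : ℂ)) ρ :=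
    (differentiableAt_const (1:ℂ)).add ((Complex.ofRealCLM.differentiableAt).comp ρ hsqrt)
  have hS0 : (1 : ℂ) + ((Real.sqrt (1 - xi ρ) : ℝ) : ℂ) ≠ 0 := by
    have hp : (0:ℝ) < 1 + Real.sqrt (1 - xi ρ) := by
      have := Real.sqrt_nonneg (1 - xi ρ); linarith
    rw [show (1 : ℂ) + ((Real.sqrt (1 - xi ρ) : ℝ) : ℂ) = (((1 + Real.sqrt (1 - xi ρ) : ℝ)) : ℂ)
      by push_cast; ring]
    exact_mod_cast ne_of_gt hp
  have hc : DifferentiableAt ℝ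
      (fun σ : Fin N → ℂ => zeta σ / (1 + ((Real.sqrt (1 - xi σ) : ℝ) : ℂ))) ρ :=
    by simp only [div_eq_mul_inv]; exact (diff_zeta ρ hρ).mul (hS.inv hS0)
  have hcs : DifferentiableAt ℝ
      (fun σ : Fin N → ℂ => (zeta σ / (1 + ((Real.sqrt (1 - xi σ) : ℝ) : ℂ))) • conjFun σ) ρ :=
    hc.smul (diff_conjFun ρ)
  have hid : DifferentiableAt ℝ (fun σ : Fin N → ℂ => σ) ρ := differentiableAt_id
  have hfx : DifferentiableAt ℝ (fun σ : Fin N → ℂ => f (xi σ)) ρ := hfd.comp ρ hxi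
  unfold P
  exact hfx.smul (hid.sub hcs)

/-- Toy model, Proposition 2 item 3 (LinProjGamma-orth)/(linprojgamma-orth): the
derivative of `P_f` maps every tangent vector into the `B`-orthogonal complement of
the projected point. -/
theorem statement14 {N : ℕ} (f : ℝ → ℂ) (ρ : Fin N → ℂ) (hρ : ρ ≠ 0) (hξ : xi ρ < 1)
    (hfd : DifferentiableAt ℝ f (xi ρ)) :
    DifferentiableAt ℝ (P f) ρ ∧
      ∀ v, B (P f ρ) (fderiv ℝ (P f) ρ v) = 0 := by
  have hP := diff_P f ρ hρ hξ hfd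
  refine ⟨hP, fun v => ?_⟩
  set y0 := P f ρ with hy0
  set D := fderiv ℝ (P f) ρ with hD
  set LQ : (Fin N → ℂ) →L[ℝ] ℂ :=
    ∑ I, (y0 I • (ContinuousLinearMap.proj (R := ℝ) (φ := fun _ : Fin N => ℂ) I)
        + y0 I • (ContinuousLinearMap.proj (R := ℝ) (φ := fun _ : Fin N => ℂ) I)) with hLQ
  have hQ : HasFDerivAt (fun y : Fin N → ℂ => B y y) LQ y0 := by
    have he : (fun y : Fin N → ℂ => B y y) = fun y => ∑ I, y I * y I := rfl
    rw [he, hLQ]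
    apply HasFDerivAt.fun_sum
    intro I _
    exact HasFDerivAt.mul (𝕜 := ℝ) (c := fun y : Fin N → ℂ => y I) (d := fun y : Fin N → ℂ => y I)
      ((ContinuousLinearMap.proj (R := ℝ) (φ := fun _ : Fin N => ℂ) I).hasFDerivAt)
      ((ContinuousLinearMap.proj (R := ℝ) (φ := fun _ : Fin N => ℂ) I).hasFDerivAt)
  have hcomp : HasFDerivAt (fun σ => B (P f σ) (P f σ)) (LQ.comp D) ρ :=
    HasFDerivAt.comp (g := fun y : Fin N → ℂ => B y y) ρ hQ hP.hasFDerivAt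
  have hev : (fun σ => B (P f σ) (P f σ)) =ᶠ[nhds ρ] (fun _ => (0:ℂ)) := by
    have h1 : ∀ᶠ σ in nhds ρ, nsq σ ≠ 0 :=
      (diff_nsq ρ).continuousAt.eventually_ne (ne_of_gt (nsq_pos ρ hρ))
    have h2 : ∀ᶠ σ in nhds ρ, xi σ < 1 :=
      (diff_xi ρ hρ).continuousAt.eventually_lt_const hξ
    filter_upwards [h1, h2] with σ ha hb
    exact Pf_null f σ ha hb.le
  have h0 : HasFDerivAt (fun σ => B (P f σ) (P f σ)) 0 ρ :=
    (hasFDerivAt_const (𝕜 := ℝ) (0:ℂ) ρ).congr_of_eventuallyEq hev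
  have huniq : LQ.comp D = 0 := hcomp.unique h0
  have hv : (2:ℂ) * B y0 (D v) = 0 := by
    have h3 := congrArg (fun (L : (Fin N → ℂ) →L[ℝ] ℂ) => L v) huniq
    rw [hLQ] at h3
    simp only [ContinuousLinearMap.comp_apply, ContinuousLinearMap.sum_apply,
      ContinuousLinearMap.add_apply, ContinuousLinearMap.smul_apply,
      ContinuousLinearMap.proj_apply, ContinuousLinearMap.zero_apply, smul_eq_mul] at h3
    calc (2:ℂ) * B y0 (D v) = ∑ I, (y0 I * (D v) I + y0 I * (D v) I) := by
          rw [B, Finset.mul_sum]; exact Finset.sum_congr rfl fun I _ => by ring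
      _ = 0 := h3
  exact (mul_eq_zero.mp hv).resolve_left two_ne_zero

end PureSpinorToy
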